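/- Let X, Z be the 2 × 2 Pauli matrices with real powers Z^t = diag(1, e^{iπt}) and X^t = H Z^t H. For c ∈ {0,1} and b₀, b₁ ∈ {0,1}, define |φ^c_{b₀,b₁}⟩ = (X^{(−1)^c b₀ + (1−2c)/4} Z^{(−1)^c b₁ + (1−2c)/4} ⊗ I)|ψ⁺⟩. Then for each fixed c, the four vectors {|φ^c_{b₀,b₁}⟩ : b₀, b₁ ∈ {0,1}} form an orthonormal basis of ℂ² ⊗ ℂ². (These are the measurement bases used by Bob in the QRAC-SE protocol 2₄ → (1₂, 1₂) for choice c.) -/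

import Mathlib

open Matrix Kronecker BigOperators Complex

noncomputable section

/-- The maximally entangled state `|ψ⁺⟩ = (1/√2)(|00⟩ + |11⟩)` on `ℂ² ⊗ ℂ²`. -/
def mes2 : Fin 2 × Fin 2 → ℂ :=
  fun p => if p.1 = p.2 then ((1 / Real.sqrt 2 : ℝ) : ℂ) else 0

/-- The Hadamard matrix `H = (1/√2)[[1,1],[1,−1]]`. -/
def Hm : Matrix (Fin 2) (Fin 2) ℂ :=
  ((1 / Real.sqrt 2 : ℝ) : ℂ) • !![1, 1; 1, -1]

/-- Real powers of the Pauli `Z`: `Z^t = diag(1, e^{iπt})`. -/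
def Zpow (t : ℝ) : Matrix (Fin 2) (Fin 2) ℂ :=
  !![1, 0; 0, Complex.exp (Real.pi * t * Complex.I)]

/-- Real powers of the Pauli `X`: `X^t = H Z^t H`. -/
def Xpow (t : ℝ) : Matrix (Fin 2) (Fin 2) ℂ :=
  Hm * Zpow t * Hm

/-- Overlap `⟨ψ⁺|(X^s Z^t ⊗ I)|ψ⁺⟩`. -/
def overlap (s t : ℝ) : ℂ :=
  star mes2 ⬝ᵥ ((Xpow s * Zpow t) ⊗ₖ (1 : Matrix (Fin 2) (Fin 2) ℂ)).mulVec mes2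

/-- Bob's decoding vectors
`|φ^c_{b₀,b₁}⟩ = (X^{(−1)^c b₀ + (1−2c)/4} Z^{(−1)^c b₁ + (1−2c)/4} ⊗ I)|ψ⁺⟩`. -/
def bobVec (c b₀ b₁ : Fin 2) : Fin 2 × Fin 2 → ℂ :=
  ((Xpow ((-1 : ℝ) ^ (c : ℕ) * ((b₀ : ℕ) : ℝ) + (1 - 2 * ((c : ℕ) : ℝ)) / 4) *
      Zpow ((-1 : ℝ) ^ (c : ℕ) * ((b₁ : ℕ) : ℝ) + (1 - 2 * ((c : ℕ) : ℝ)) / 4)) ⊗ₖ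
    (1 : Matrix (Fin 2) (Fin 2) ℂ)).mulVec mes2


lemma sqrt2_mul : ((Real.sqrt 2 : ℝ) : ℂ) * ((Real.sqrt 2 : ℝ) : ℂ) = 2 := by
  norm_cast; exact Real.mul_self_sqrt (by norm_num)

lemma XZ_eq (s t : ℝ) :
    Xpow s * Zpow t =
      let e := Complex.exp (Real.pi * s * Complex.I)
      let f := Complex.exp (Real.pi * t * Complex.I)
      !![(1+e)/2, (1-e)*f/2; (1-e)/2, (1+e)*f/2] := by
  ext i j
  fin_cases i <;> fin_cases j <;>
    simp [Xpow, Hm, Zpow, Matrix.mul_apply, Fin.sum_univ_two] <;>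
    field_simp <;>
    first
    | exact Or.inl sqrt2_mul.symm
    | (rw [sq, sqrt2_mul]; ring)

lemma vec_apply (s t : ℝ) (p : Fin 2 × Fin 2) :
    (((Xpow s * Zpow t) ⊗ₖ (1 : Matrix (Fin 2) (Fin 2) ℂ)).mulVec mes2) p =
      ((1 / Real.sqrt 2 : ℝ) : ℂ) * (Xpow s * Zpow t) p.1 p.2 := by
  obtain ⟨i, j⟩ := p
  simp [mulVec, dotProduct, Fintype.sum_prod_type, Fin.sum_univ_two, mes2,
    Matrix.one_apply, kroneckerMap_apply]
  fin_cases i <;> fin_cases j <;> simp <;> ring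

lemma overlap_eq (s t s' t' : ℝ) :
    star (((Xpow s * Zpow t) ⊗ₖ (1 : Matrix (Fin 2) (Fin 2) ℂ)).mulVec mes2) ⬝ᵥ
      (((Xpow s' * Zpow t') ⊗ₖ (1 : Matrix (Fin 2) (Fin 2) ℂ)).mulVec mes2) =
      (1 + Complex.exp (Real.pi * (s' - s) * Complex.I)) *
      (1 + Complex.exp (Real.pi * (t' - t) * Complex.I)) / 4 := by
  have hconj : ∀ u : ℝ, (starRingEnd ℂ) (Complex.exp (Real.pi * u * Complex.I)) =
      (Complex.exp (Real.pi * u * Complex.I))⁻¹ := by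
    intro u
    rw [← Complex.exp_conj, ← Complex.exp_neg]
    congr 1
    simp [Complex.ext_iff]
  have hdiff : ∀ u u' : ℝ, Complex.exp (Real.pi * (u' - u) * Complex.I) =
      Complex.exp (Real.pi * u' * Complex.I) * (Complex.exp (Real.pi * u * Complex.I))⁻¹ := by
    intro u u'
    rw [← Complex.exp_neg, ← Complex.exp_add]
    congr 1
    ring
  simp only [dotProduct, Pi.star_apply, vec_apply, Fintype.sum_prod_type, Fin.sum_univ_two]
  simp only [XZ_eq, Matrix.cons_val', Matrix.cons_val_zero, Matrix.cons_val_one, Matrix.head_cons,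
    Matrix.empty_val', Matrix.cons_val_fin_one, Matrix.head_fin_const, Matrix.of_apply,
    Matrix.cons_val', star_mul', RCLike.star_def]
  simp only [_root_.map_mul, map_add, map_sub, _root_.map_one, map_div₀, Complex.conj_ofReal,
    hconj, map_ofNat]
  rw [hdiff s s', hdiff t t']
  have h1 := Complex.exp_ne_zero (Real.pi * s * Complex.I)
  have h2 := Complex.exp_ne_zero (Real.pi * t * Complex.I)
  have hs : ((Real.sqrt 2 : ℝ) : ℂ) ≠ 0 := by
    norm_cast; positivity
  ring_nf
  have hinv : ((((Real.sqrt 2)⁻¹ : ℝ)) : ℂ) ^ 2 = 1 / 2 := by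
    norm_cast
    rw [inv_pow, Real.sq_sqrt (by norm_num : (0:ℝ) ≤ 2)]
    norm_num
  rw [hinv]
  ring

lemma exp_neg_pi_mul_I : Complex.exp (-(↑Real.pi * Complex.I)) = -1 := by
  rw [Complex.exp_neg, Complex.exp_pi_mul_I]
  norm_num


/-- For each fixed choice `c ∈ {0,1}`, the four vectors `|φ^c_{b₀,b₁}⟩`, `b₀, b₁ ∈ {0,1}`,
form an orthonormal basis of `ℂ² ⊗ ℂ²`: they are pairwise orthonormal and span the space. -/
theorem bob_basis_orthonormal (c : Fin 2) :
    (∀ b b' : Fin 2 × Fin 2,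
        star (bobVec c b.1 b.2) ⬝ᵥ bobVec c b'.1 b'.2 = if b = b' then 1 else 0) ∧
    Submodule.span ℂ (Set.range fun b : Fin 2 × Fin 2 => bobVec c b.1 b.2) = ⊤ := by
  have key : ∀ b b' : Fin 2 × Fin 2,
      star (bobVec c b.1 b.2) ⬝ᵥ bobVec c b'.1 b'.2 = if b = b' then 1 else 0 := by
    intro b b'
    obtain ⟨b₀, b₁⟩ := b
    obtain ⟨b₀', b₁'⟩ := b'
    simp only [bobVec, overlap_eq]
    fin_cases c <;> fin_cases b₀ <;> fin_cases b₁ <;> fin_cases b₀' <;> fin_cases b₁' <;>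
      norm_num [Complex.exp_pi_mul_I, _root_.exp_neg_pi_mul_I, Prod.ext_iff]
  refine ⟨key, ?_⟩
  have hLI : LinearIndependent ℂ (fun b : Fin 2 × Fin 2 => bobVec c b.1 b.2) := by
    rw [linearIndependent_iff']
    intro s g hsum j hj
    have h := congrArg (fun v => star (bobVec c j.1 j.2) ⬝ᵥ v) hsum
    simp only [dotProduct_zero] at h
    rw [show (star (bobVec c j.1 j.2) ⬝ᵥ ∑ i ∈ s, g i • bobVec c i.1 i.2) =
        ∑ i ∈ s, g i * (star (bobVec c j.1 j.2) ⬝ᵥ bobVec c i.1 i.2) by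
      simp only [dotProduct, Finset.sum_apply, Pi.smul_apply, smul_eq_mul, Finset.mul_sum]
      rw [Finset.sum_comm]
      exact Finset.sum_congr rfl fun i _ => Finset.sum_congr rfl fun k _ => by ring] at h
    simp only [key] at h
    rw [Finset.sum_eq_single j (fun i _ hne => by simp [hne.symm, if_neg])
      (fun h' => absurd hj h')] at h
    simpa using h
  exact hLI.span_eq_top_of_card_eq_finrank (by simp)
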